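/- arXiv:1606.09140 — 5 statements merged into one kernel-verified Lean document; each statement's English description precedes it below -/
import Mathlib

section
/- Let φ be a map from a non-associative relation algebra A to the power set of D×D that respects the boolean operators, maps 1' to the identity relation on D, and maps x̆ to the converse relation of φ(x). Then φ is a qualitative representation (i.e., for all a,b,c: φ(c) ⊇ φ(a)∘φ(b) iff c ≥ a;b) if and only if for all a,b,c ∈ A: a;b·c ≠ 0 iff there exist x,y,z ∈ D with (x,y)∈φ(a), (y,z)∈φ(b), (x,z)∈φ(c). -/
/-- A non-associative relation algebra: a boolean algebra with normal additive
involuted-monoid operators satisfying the Peircean law. -/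
class NAAlg (α : Type*) extends BooleanAlgebra α where
  comp : α → α → α
  conv : α → α
  ident : α
  comp_ident : ∀ x : α, comp x ident = x
  ident_comp : ∀ x : α, comp ident x = x
  conv_conv : ∀ x : α, conv (conv x) = x
  conv_comp : ∀ x y : α, conv (comp x y) = comp (conv y) (conv x)
  conv_bot : conv ⊥ = ⊥
  comp_bot : ∀ x : α, comp x ⊥ = ⊥
  conv_sup : ∀ x y : α, conv (x ⊔ y) = conv x ⊔ conv y
  comp_sup : ∀ x y z : α, comp x (y ⊔ z) = comp x y ⊔ comp x z
  peirce : ∀ x y z : α, comp x y ⊓ conv z = ⊥ ↔ comp y z ⊓ conv x = ⊥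

/-- Composition of binary relations. -/
def rcomp {D : Type*} (r s : Set (D × D)) : Set (D × D) :=
  {p | ∃ z, (p.1, z) ∈ r ∧ (z, p.2) ∈ s}

theorem stmt2 {α D : Type*} [NAAlg α] (φ : α → Set (D × D))
    (h_top : φ ⊤ = Set.univ)
    (h_compl : ∀ a : α, φ aᶜ = Set.univ \ φ a)
    (h_sup : ∀ a b : α, φ (a ⊔ b) = φ a ∪ φ b)
    (h_ident : φ NAAlg.ident = {p : D × D | p.1 = p.2})
    (h_conv : ∀ a : α, φ (NAAlg.conv a) = {p : D × D | (p.2, p.1) ∈ φ a}) :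
    (∀ a b c : α, rcomp (φ a) (φ b) ⊆ φ c ↔ NAAlg.comp a b ≤ c) ↔
    (∀ a b c : α, NAAlg.comp a b ⊓ c ≠ ⊥ ↔
      ∃ x y z : D, (x, y) ∈ φ a ∧ (y, z) ∈ φ b ∧ (x, z) ∈ φ c) := by
  constructor
  · intro H a b c
    constructor
    · intro hne
      by_contra hno
      push_neg at hno
      apply hne
      have hle : NAAlg.comp a b ≤ cᶜ := by
        rw [← (H a b cᶜ)]
        rintro ⟨x, z⟩ ⟨y, ha, hb⟩
        rw [h_compl]
        exact ⟨trivial, fun hc => (hno x y z ha hb hc).elim⟩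
      exact disjoint_iff.mp (le_compl_iff_disjoint_right.mp hle)
    · rintro ⟨x, y, z, ha, hb, hc⟩ heq
      have hle : NAAlg.comp a b ≤ cᶜ := le_compl_iff_disjoint_right.mpr (disjoint_iff.mpr heq)
      have := (H a b cᶜ).mpr hle (show (x, z) ∈ rcomp (φ a) (φ b) from ⟨y, ha, hb⟩)
      rw [h_compl] at this
      exact this.2 hc
  · intro H a b c
    constructor
    · intro hsub
      rw [← compl_compl c, le_compl_iff_disjoint_right, disjoint_iff]
      by_contra hne
      obtain ⟨x, y, z, ha, hb, hc⟩ := (H a b cᶜ).mp hne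
      rw [h_compl] at hc
      exact hc.2 (hsub ⟨y, ha, hb⟩)
    · rintro hle ⟨x, z⟩ ⟨y, ha, hb⟩
      by_contra hc
      have hne : NAAlg.comp a b ⊓ cᶜ ≠ ⊥ :=
        (H a b cᶜ).mpr ⟨x, y, z, ha, hb, by rw [h_compl]; exact ⟨trivial, hc⟩⟩
      exact hne (disjoint_iff.mp (disjoint_compl_right.mono_left hle))
end

section
/- An integral non-associative relation algebra (one in which x;y=0 implies x=0 or y=0) is semi-associative: x;(1;1) = (x;1);1 for all x. -/
namespace NAAlg

variable {α : Type*} [NAAlg α]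

lemma conv_mono {x y : α} (h : x ≤ y) : conv x ≤ conv y := by
  have : conv y = conv x ⊔ conv y := by
    rw [← conv_sup, sup_eq_right.mpr h]
  rw [this]; exact le_sup_left

lemma conv_top : (conv ⊤ : α) = ⊤ := by
  have h : (⊤ : α) = ⊤ ⊔ conv ⊤ := by simp
  have := congrArg (conv : α → α) h
  rw [conv_sup, conv_conv] at this
  simpa using this

lemma bot_comp (y : α) : comp ⊥ y = ⊥ := by
  have : comp (⊥ : α) y = conv (comp (conv y) (conv ⊥)) := by
    rw [← conv_comp, conv_conv]
  rw [this, conv_bot, comp_bot, conv_bot]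

lemma comp_top_eq_top (hint : ∀ x y : α, comp x y = ⊥ → x = ⊥ ∨ y = ⊥)
    {x : α} (hx : x ≠ ⊥) : comp x ⊤ = ⊤ := by
  set u : α := (comp x ⊤)ᶜ with hu
  have h1 : comp x ⊤ ⊓ conv (conv u) = ⊥ := by
    rw [conv_conv]; exact inf_compl_eq_bot
  have h2 : comp ⊤ (conv u) ⊓ conv x = ⊥ := (peirce x ⊤ (conv u)).mp h1
  have h3 : comp (conv u) x ⊓ conv ⊤ = ⊥ := (peirce ⊤ (conv u) x).mp h2
  rw [conv_top, inf_top_eq] at h3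
  rcases hint _ _ h3 with h | h
  · have : u = ⊥ := by
      have := congrArg (conv : α → α) h
      rwa [conv_conv, conv_bot] at this
    have : comp x ⊤ = ⊥ᶜ := by rw [← this, hu, compl_compl]
    simpa using this
  · exact absurd h hx

end NAAlg

theorem stmt5 {α : Type*} [NAAlg α]
    (hint : ∀ x y : α, NAAlg.comp x y = ⊥ → x = ⊥ ∨ y = ⊥) :
    ∀ x : α, NAAlg.comp x (NAAlg.comp ⊤ ⊤) = NAAlg.comp (NAAlg.comp x ⊤) ⊤ := by
  intro x
  by_cases hx : x = ⊥
  · subst hx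
    rw [NAAlg.bot_comp, NAAlg.bot_comp, NAAlg.bot_comp]
  · have htop : (⊤ : α) ≠ ⊥ := by
      intro h
      exact hx (le_bot_iff.mp (h ▸ le_top))
    rw [NAAlg.comp_top_eq_top hint htop, NAAlg.comp_top_eq_top hint hx,
      NAAlg.comp_top_eq_top hint htop]
end

section
/- Let A be a non-associative relation algebra with a qualitative representation φ on base D satisfying condition (*): for all a,b,c,d, (φ(a)∘φ(b)) ∩ (φ(c)∘φ(d)) = ∅ iff (a;b)·(c;d) = 0. Then A is associative: (a;b);c = a;(b;c) for all a,b,c. -/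
/-- A qualitative representation of a non-associative relation algebra. -/
structure IsQualRep {α D : Type*} [NAAlg α] (φ : α → Set (D × D)) : Prop where
  map_bot : φ ⊥ = ∅
  map_top : φ ⊤ = Set.univ
  map_sup : ∀ a b : α, φ (a ⊔ b) = φ a ∪ φ b
  map_compl : ∀ a : α, φ aᶜ = Set.univ \ φ a
  map_ident : φ NAAlg.ident = {p : D × D | p.1 = p.2}
  map_conv : ∀ a : α, φ (NAAlg.conv a) = {p : D × D | (p.2, p.1) ∈ φ a}
  qual : ∀ a b c : α, rcomp (φ a) (φ b) ⊆ φ c ↔ NAAlg.comp a b ≤ c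

theorem stmt7 {α D : Type*} [NAAlg α] (φ : α → Set (D × D)) (h : IsQualRep φ)
    (hstar : ∀ a b c d : α,
      rcomp (φ a) (φ b) ∩ rcomp (φ c) (φ d) = ∅ ↔ NAAlg.comp a b ⊓ NAAlg.comp c d = ⊥) :
    ∀ a b c : α, NAAlg.comp (NAAlg.comp a b) c = NAAlg.comp a (NAAlg.comp b c) := by
  intro a b c
  open NAAlg in
  have key : ∀ d : α, comp (comp a b) c ⊓ d = ⊥ ↔ comp a (comp b c) ⊓ d = ⊥ := by
    intro d
    have h1 : comp (comp a b) c ⊓ d = ⊥ ↔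
        comp c (conv d) ⊓ comp (conv b) (conv a) = ⊥ := by
      have := peirce (comp a b) c (conv d)
      rw [conv_conv, conv_comp] at this
      exact this
    have h2 : comp a (comp b c) ⊓ d = ⊥ ↔
        comp (conv d) a ⊓ comp (conv c) (conv b) = ⊥ := by
      have p1 := peirce a (comp b c) (conv d)
      rw [conv_conv] at p1
      have p2 := peirce (comp b c) (conv d) a
      rw [conv_comp] at p2
      exact p1.trans p2
    rw [h1, h2, ← hstar, ← hstar]
    simp only [Set.eq_empty_iff_forall_notMem, Set.mem_inter_iff, rcomp,
      Set.mem_setOf_eq, h.map_conv, not_and, not_exists]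
    constructor
    · intro H p hu v hv1 hv2
      obtain ⟨u, hu1, hu2⟩ := hu
      exact H (v, u) ⟨p.1, hv1, hu1⟩ p.2 hv2 hu2
    · intro H p hu z hz1 hz2
      obtain ⟨y, hy1, hy2⟩ := hu
      exact H (y, z) ⟨p.2, hy2, hz2⟩ p.1 hy1 hz1
  apply le_antisymm
  · rw [← sdiff_eq_bot_iff, sdiff_eq]
    exact (key _).mpr (by rw [← sdiff_eq, sdiff_eq_bot_iff])
  · rw [← sdiff_eq_bot_iff, sdiff_eq]
    exact (key _).mp (by rw [← sdiff_eq, sdiff_eq_bot_iff])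
end

section
/- For any qualitative representation φ of a non-associative relation algebra A on base D, and any nonzero a ∈ A, the equation (1;a);1 = 1;(a;1) holds when evaluated via φ: both sides are represented as all of D×D if a ≠ 0 and as ∅ if a = 0. Consequently the equation (1;x);1 = 1;(x;1) is valid in every qualitatively representable non-associative relation algebra. -/
lemma IsQualRep.mono {α D : Type*} [NAAlg α] {φ : α → Set (D × D)} (h : IsQualRep φ)
    {a b : α} (hab : a ≤ b) : φ a ⊆ φ b := by
  have : a ⊔ b = b := sup_eq_right.mpr hab
  rw [← this, h.map_sup]; exact Set.subset_union_left

lemma IsQualRep.sub_comp {α D : Type*} [NAAlg α] {φ : α → Set (D × D)} (h : IsQualRep φ)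
    (a b : α) : rcomp (φ a) (φ b) ⊆ φ (NAAlg.comp a b) :=
  (h.qual a b _).mpr le_rfl

lemma IsQualRep.ne_empty {α D : Type*} [NAAlg α] {φ : α → Set (D × D)} (h : IsQualRep φ)
    {a : α} (ha : a ≠ ⊥) : (φ a).Nonempty := by
  rw [Set.nonempty_iff_ne_empty]
  intro he
  apply ha
  have : rcomp (φ NAAlg.ident) (φ a) ⊆ φ ⊥ := by
    rintro ⟨u, v⟩ ⟨z, _, hz⟩
    rw [he] at hz; exact hz.elim
  have := (h.qual _ _ _).mp this
  rw [NAAlg.ident_comp] at this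
  exact le_bot_iff.mp this

theorem stmt8 {α D : Type*} [NAAlg α] (φ : α → Set (D × D)) (h : IsQualRep φ) (a : α) :
    (a ≠ ⊥ → φ (NAAlg.comp (NAAlg.comp ⊤ a) ⊤) = Set.univ ∧
              φ (NAAlg.comp ⊤ (NAAlg.comp a ⊤)) = Set.univ) ∧
    (a = ⊥ → φ (NAAlg.comp (NAAlg.comp ⊤ a) ⊤) = ∅ ∧
             φ (NAAlg.comp ⊤ (NAAlg.comp a ⊤)) = ∅) ∧
    NAAlg.comp (NAAlg.comp ⊤ a) ⊤ = NAAlg.comp ⊤ (NAAlg.comp a ⊤) := by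
  have hbot : NAAlg.comp (⊥ : α) ⊤ = ⊥ := by
    have := NAAlg.conv_comp (NAAlg.conv (⊤ : α)) (NAAlg.conv (⊥ : α))
    rw [NAAlg.conv_conv, NAAlg.conv_conv, NAAlg.conv_bot, NAAlg.comp_bot,
      NAAlg.conv_bot] at this
    exact this.symm
  have key : a ≠ ⊥ → φ (NAAlg.comp (NAAlg.comp ⊤ a) ⊤) = Set.univ ∧
              φ (NAAlg.comp ⊤ (NAAlg.comp a ⊤)) = Set.univ := by
    intro ha
    obtain ⟨⟨x, y⟩, hxy⟩ := h.ne_empty ha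
    constructor
    · apply Set.eq_univ_of_univ_subset
      rintro ⟨u, v⟩ -
      apply h.sub_comp
      refine ⟨y, h.sub_comp ⊤ a ⟨x, ?_, hxy⟩, ?_⟩ <;> simp [h.map_top]
    · apply Set.eq_univ_of_univ_subset
      rintro ⟨u, v⟩ -
      apply h.sub_comp
      refine ⟨x, ?_, h.sub_comp a ⊤ ⟨y, hxy, ?_⟩⟩ <;> simp [h.map_top]
  refine ⟨key, ?_, ?_⟩
  · rintro rfl
    rw [NAAlg.comp_bot, hbot, NAAlg.comp_bot, h.map_bot]
    exact ⟨rfl, rfl⟩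
  · by_cases ha : a = ⊥
    · subst ha; rw [NAAlg.comp_bot, hbot, NAAlg.comp_bot]
    · obtain ⟨h1, h2⟩ := key ha
      apply le_antisymm
      · refine (h.qual _ _ _).mp ?_
        rw [h2]; exact fun p _ => trivial
      · refine (h.qual _ _ _).mp ?_
        rw [h1]; exact fun p _ => trivial
end

section
/- If A is a finite, atomic, qualitatively representable non-associative relation algebra with n atoms, then A has a qualitative representation over a base of size at most 3n³. -/
namespace StmtAux

open NAAlg

lemma comp_sup_left {α : Type*} [NAAlg α] (x y z : α) :
    comp (x ⊔ y) z = comp x z ⊔ comp y z := by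
  have h : ∀ a b : α, comp a b = conv (comp (conv b) (conv a)) := by
    intro a b; rw [← conv_comp, conv_conv]
  rw [h (x ⊔ y) z, conv_sup, comp_sup, conv_sup, h x z, h y z]

lemma bot_comp {α : Type*} [NAAlg α] (x : α) : comp ⊥ x = ⊥ := by
  have h1 : conv (comp ⊥ x) = ⊥ := by
    rw [conv_comp, conv_bot, comp_bot]
  have h2 := congrArg conv h1
  rwa [conv_conv, conv_bot] at h2

lemma exists_atom_right {α : Type*} [NAAlg α] [Fintype α] {a b c : α}
    (h : comp a b ⊓ c ≠ ⊥) : ∃ b', IsAtom b' ∧ b' ≤ b ∧ comp a b' ⊓ c ≠ ⊥ := by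
  classical
  let s : Finset α := Finset.univ.filter (fun x => x ≤ b ∧ comp a x ⊓ c ≠ ⊥)
  have hmem : ∀ x : α, x ∈ s ↔ x ≤ b ∧ comp a x ⊓ c ≠ ⊥ := by
    intro x; simp [s]
  have hb : b ∈ s := (hmem b).mpr ⟨le_rfl, h⟩
  obtain ⟨m, hm, hmin⟩ := s.exists_minimal ⟨b, hb⟩
  rw [hmem] at hm
  have hmne : m ≠ ⊥ := by
    rintro rfl
    rw [comp_bot, bot_inf_eq] at hm
    exact hm.2 rfl
  refine ⟨m, ⟨hmne, ?_⟩, hm.1, hm.2⟩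
  intro x hx
  by_contra hxne
  have hxm : x ≤ m := hx.le
  have hsplit : m = x ⊔ m \ x := (sup_sdiff_cancel' le_rfl hxm).symm
  have hd : comp a m ⊓ c = (comp a x ⊓ c) ⊔ (comp a (m \ x) ⊓ c) := by
    conv_lhs => rw [hsplit]
    rw [comp_sup, inf_sup_right]
  rw [hd] at hm
  rcases (em (comp a x ⊓ c = ⊥)) with h1 | h1
  · have h2 : comp a (m \ x) ⊓ c ≠ ⊥ := by
      intro h2; exact hm.2 (by rw [h1, h2, sup_idem])
    have hlt : m \ x < m := sdiff_lt hxm hxne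
    have : m \ x ∈ s := (hmem _).mpr ⟨le_trans (sdiff_le) hm.1, h2⟩
    exact absurd (hmin this hlt.le) (not_le_of_gt hlt)
  · have : x ∈ s := (hmem _).mpr ⟨le_trans hxm hm.1, h1⟩
    exact absurd (hmin this hx.le) (not_le_of_gt hx)

lemma exists_atom_left {α : Type*} [NAAlg α] [Fintype α] {a b c : α}
    (h : comp a b ⊓ c ≠ ⊥) : ∃ a', IsAtom a' ∧ a' ≤ a ∧ comp a' b ⊓ c ≠ ⊥ := by
  classical
  let s : Finset α := Finset.univ.filter (fun x => x ≤ a ∧ comp x b ⊓ c ≠ ⊥)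
  have hmem : ∀ x : α, x ∈ s ↔ x ≤ a ∧ comp x b ⊓ c ≠ ⊥ := by
    intro x; simp [s]
  have hb : a ∈ s := (hmem a).mpr ⟨le_rfl, h⟩
  obtain ⟨m, hm, hmin⟩ := s.exists_minimal ⟨a, hb⟩
  rw [hmem] at hm
  have hmne : m ≠ ⊥ := by
    rintro rfl
    rw [bot_comp, bot_inf_eq] at hm
    exact hm.2 rfl
  refine ⟨m, ⟨hmne, ?_⟩, hm.1, hm.2⟩
  intro x hx
  by_contra hxne
  have hxm : x ≤ m := hx.le
  have hsplit : m = x ⊔ m \ x := (sup_sdiff_cancel' le_rfl hxm).symm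
  have hd : comp m b ⊓ c = (comp x b ⊓ c) ⊔ (comp (m \ x) b ⊓ c) := by
    conv_lhs => rw [hsplit]
    rw [comp_sup_left, inf_sup_right]
  rw [hd] at hm
  rcases (em (comp x b ⊓ c = ⊥)) with h1 | h1
  · have h2 : comp (m \ x) b ⊓ c ≠ ⊥ := by
      intro h2; exact hm.2 (by rw [h1, h2, sup_idem])
    have hlt : m \ x < m := sdiff_lt hxm hxne
    have : m \ x ∈ s := (hmem _).mpr ⟨le_trans (sdiff_le) hm.1, h2⟩
    exact absurd (hmin this hlt.le) (not_le_of_gt hlt)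
  · have : x ∈ s := (hmem _).mpr ⟨le_trans hxm hm.1, h1⟩
    exact absurd (hmin this hx.le) (not_le_of_gt hx)

lemma rep_mono {α D : Type*} [NAAlg α] {φ : α → Set (D × D)} (h : IsQualRep φ)
    {a b : α} (hab : a ≤ b) : φ a ⊆ φ b := by
  have : φ b = φ a ∪ φ b := by rw [← h.map_sup, sup_eq_right.mpr hab]
  rw [this]; exact Set.subset_union_left

lemma exists_witness {α D : Type*} [NAAlg α] {φ : α → Set (D × D)} (h : IsQualRep φ)
    {a b c : α} (hne : comp a b ⊓ c ≠ ⊥) :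
    ∃ x y z : D, (x, y) ∈ φ a ∧ (y, z) ∈ φ b ∧ (x, z) ∈ φ c := by
  have hnle : ¬ comp a b ≤ cᶜ := by
    intro hle
    apply hne
    have h1 : comp a b ⊓ c ≤ cᶜ ⊓ c := inf_le_inf_right c hle
    rw [inf_comm cᶜ c, inf_compl_eq_bot] at h1
    exact le_bot_iff.mp h1
  rw [← h.qual] at hnle
  obtain ⟨p, hp, hpc⟩ := Set.not_subset.mp hnle
  obtain ⟨z, h1, h2⟩ := hp
  refine ⟨p.1, z, p.2, h1, h2, ?_⟩
  by_contra hpcφ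
  exact hpc (by rw [h.map_compl]; exact ⟨trivial, hpcφ⟩)

end StmtAux

open NAAlg StmtAux in
theorem stmt12 {α : Type} [NAAlg α] [Fintype α] [IsAtomic α]
    (hrep : ∃ (D : Type) (φ : α → Set (D × D)), Function.Injective φ ∧ IsQualRep φ) :
    ∃ (D : Type) (_ : Fintype D) (φ : α → Set (D × D)),
      Nat.card D ≤ 3 * (Nat.card {x : α // IsAtom x}) ^ 3 ∧
      Function.Injective φ ∧ IsQualRep φ := by
  classical
  obtain ⟨D, φ, hinj, hq⟩ := hrep
  by_cases hA : IsEmpty {x : α // IsAtom x}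
  · -- trivial algebra: no atoms, so everything is ⊥
    have hbot : ∀ x : α, x = ⊥ := by
      intro x
      rcases eq_bot_or_exists_atom_le x with h | ⟨e, he, _⟩
      · exact h
      · exact absurd ⟨e, he⟩ (not_nonempty_iff.mpr hA)
    have hempty : ∀ s : Set (PEmpty × PEmpty), s = ∅ := by
      intro s; ext p; exact ⟨fun _ => p.1.elim, fun h => h.elim⟩
    refine ⟨PEmpty, inferInstance, fun _ => ∅, ?_, ?_, ?_⟩
    · simp
    · intro a b _
      rw [hbot a, hbot b]
    · constructor
      · rfl
      · exact (hempty _).symm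
      · intro a b; simp
      · intro a; rw [hempty (Set.univ \ ∅)]
      · exact (hempty _).symm
      · intro a; exact (hempty _).symm
      · intro a b c
        constructor
        · intro _; rw [hbot (comp a b)]; exact bot_le
        · intro _ p hp
          obtain ⟨z, _, _⟩ := hp
          exact z.elim
  · rw [not_isEmpty_iff] at hA
    obtain ⟨e₀, he₀⟩ := hA
    -- D is nonempty
    have hDne : Nonempty D := by
      have : φ e₀ ≠ φ ⊥ := fun h => he₀.1 (hinj h)
      rw [hq.map_bot] at this
      obtain ⟨p, hp⟩ := Set.nonempty_iff_ne_empty.mpr this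
      exact ⟨p.1⟩
    obtain ⟨d₀⟩ := hDne
    set A := {x : α // IsAtom x} with hAdef
    set T := A × A × A with hTdef
    -- witness function
    have key : ∀ t : T, ∃ w : D × D × D,
        comp t.1.1 t.2.1.1 ⊓ t.2.2.1 ≠ ⊥ →
          (w.1, w.2.1) ∈ φ t.1.1 ∧ (w.2.1, w.2.2) ∈ φ t.2.1.1 ∧
            (w.1, w.2.2) ∈ φ t.2.2.1 := by
      intro t
      by_cases h : comp t.1.1 t.2.1.1 ⊓ t.2.2.1 ≠ ⊥
      · obtain ⟨x, y, z, h1, h2, h3⟩ := exists_witness hq h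
        exact ⟨(x, y, z), fun _ => ⟨h1, h2, h3⟩⟩
      · exact ⟨(d₀, d₀, d₀), fun hc => absurd hc h⟩
    choose W hW using key
    set D' : Set D := (Set.range fun t => (W t).1) ∪ (Set.range fun t => (W t).2.1) ∪
      (Set.range fun t => (W t).2.2) with hD'def
    have hfin : D'.Finite :=
      ((Set.finite_range _).union (Set.finite_range _)).union (Set.finite_range _)
    -- membership of witnesses
    have hWmem : ∀ t : T, (W t).1 ∈ D' ∧ (W t).2.1 ∈ D' ∧ (W t).2.2 ∈ D' := by
      intro t
      exact ⟨Or.inl (Or.inl ⟨t, rfl⟩), Or.inl (Or.inr ⟨t, rfl⟩), Or.inr ⟨t, rfl⟩⟩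
    -- cardinality bound
    have hcard : Nat.card ↥D' ≤ 3 * (Nat.card A) ^ 3 := by
      have h1 : ∀ f : T → D, (Set.range f).ncard ≤ Nat.card T := by
        intro f
        rw [← Set.image_univ, ← Set.ncard_univ T]
        exact Set.ncard_image_le Set.finite_univ
      have h2 : D'.ncard ≤ 3 * Nat.card T := by
        calc D'.ncard ≤ ((Set.range fun t => (W t).1) ∪
              (Set.range fun t => (W t).2.1)).ncard +
              (Set.range fun t => (W t).2.2).ncard := Set.ncard_union_le _ _
          _ ≤ ((Set.range fun t => (W t).1).ncard +
              (Set.range fun t => (W t).2.1).ncard) +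
              (Set.range fun t => (W t).2.2).ncard := by
                exact Nat.add_le_add_right (Set.ncard_union_le _ _) _
          _ ≤ Nat.card T + Nat.card T + Nat.card T := by
                exact Nat.add_le_add (Nat.add_le_add (h1 _) (h1 _)) (h1 _)
          _ = 3 * Nat.card T := by ring
      have h3 : Nat.card T = (Nat.card A) ^ 3 := by
        rw [hTdef, Nat.card_prod, Nat.card_prod]; ring
      rw [Nat.card_coe_set_eq, ← h3]
      exact h2
    -- the restricted representation
    set ψ : α → Set (↥D' × ↥D') :=
      fun a => {p | ((p.1 : D), (p.2 : D)) ∈ φ a} with hψdef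
    -- every atom is realized by a point with both coordinates in D'
    have hpoint : ∀ e : α, IsAtom e →
        ∃ p : ↥D' × ↥D', ((p.1 : D), (p.2 : D)) ∈ φ e := by
      intro e he
      have h0 : comp e ident ⊓ e ≠ ⊥ := by
        rw [comp_ident, inf_idem]; exact he.1
      obtain ⟨a', ha', haa, h1⟩ := exists_atom_left h0
      obtain ⟨b', hb', hbb, h2⟩ := exists_atom_right h1
      set t : T := (⟨a', ha'⟩, ⟨b', hb'⟩, ⟨e, he⟩) with htdef
      have hw := hW t h2
      obtain ⟨hm1, hm2, hm3⟩ := hWmem t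
      exact ⟨(⟨(W t).1, hm1⟩, ⟨(W t).2.2, hm3⟩), hw.2.2⟩
    -- injectivity
    have hle : ∀ a b : α, ψ a = ψ b → a ≤ b := by
      intro a b hab
      by_contra h
      have hne : a \ b ≠ ⊥ := fun hb => h (sdiff_eq_bot_iff.mp hb)
      obtain ⟨e, he, hee⟩ := (eq_bot_or_exists_atom_le (a \ b)).resolve_left hne
      obtain ⟨p, hp⟩ := hpoint e he
      have hpa : p ∈ ψ a := rep_mono hq (le_trans hee sdiff_le) hp
      rw [hab] at hpa
      have hpb : ((p.1 : D), (p.2 : D)) ∈ φ b := hpa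
      have hcompl : ((p.1 : D), (p.2 : D)) ∈ φ bᶜ :=
        rep_mono hq (le_trans hee (by rw [sdiff_eq]; exact inf_le_right)) hp
      rw [hq.map_compl] at hcompl
      exact hcompl.2 hpb
    have hψinj : Function.Injective ψ := fun a b hab =>
      le_antisymm (hle a b hab) (hle b a hab.symm)
    refine ⟨↥D', hfin.fintype, ψ, hcard, hψinj, ?_⟩
    constructor
    · ext p; simp [hψdef, hq.map_bot]
    · ext p; simp [hψdef, hq.map_top]
    · intro a b; ext p; simp [hψdef, hq.map_sup]
    · intro a; ext p; simp [hψdef, hq.map_compl]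
    · ext p
      simp only [hψdef, hq.map_ident, Set.mem_setOf_eq]
      exact Subtype.coe_inj
    · intro a; ext p; simp [hψdef, hq.map_conv]
    · intro a b c
      constructor
      · intro hsub
        by_contra hnle
        have hne : comp a b ⊓ cᶜ ≠ ⊥ := by
          rw [← sdiff_eq]
          exact fun hb => hnle (sdiff_eq_bot_iff.mp hb)
        obtain ⟨e, he, hee⟩ :=
          (eq_bot_or_exists_atom_le (comp a b ⊓ cᶜ)).resolve_left hne
        have h1 : comp a b ⊓ e ≠ ⊥ := by
          rw [inf_eq_right.mpr (le_trans hee inf_le_left)]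
          exact he.1
        obtain ⟨a', ha', haa, h2⟩ := exists_atom_left h1
        obtain ⟨b', hb', hbb, h3⟩ := exists_atom_right h2
        set t : T := (⟨a', ha'⟩, ⟨b', hb'⟩, ⟨e, he⟩) with htdef
        have hw := hW t h3
        obtain ⟨hm1, hm2, hm3⟩ := hWmem t
        have hmem : ((⟨(W t).1, hm1⟩, ⟨(W t).2.2, hm3⟩) : ↥D' × ↥D') ∈
            rcomp (ψ a) (ψ b) :=
          ⟨⟨(W t).2.1, hm2⟩, rep_mono hq haa hw.1, rep_mono hq hbb hw.2.1⟩
        have hinc : ((W t).1, (W t).2.2) ∈ φ c := hsub hmem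
        have hce : ((W t).1, (W t).2.2) ∈ φ cᶜ :=
          rep_mono hq (le_trans hee inf_le_right) hw.2.2
        rw [hq.map_compl] at hce
        exact hce.2 hinc
      · intro hle p hp
        obtain ⟨z, h1, h2⟩ := hp
        exact (hq.qual a b c).mpr hle ⟨(z : D), h1, h2⟩
end
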